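/- Let F : Ω → 𝔻 be a bijective holomorphic map between bounded planar domains with C¹-extensions of F and its inverse G to the closures, with bounded derivatives. Then the composition map U : v ↦ v ∘ G is a bounded bijection from H¹(Ω) to H¹(𝔻) with bounded inverse, and for v = (v₁, v₂) with ∂_{z̄}v₁, ∂_z v₂ ∈ L²(Ω), the pushforward u = Uv satisfies ∂_z u₂ = (G')·(∂_z v₂)∘G ∈ L²(𝔻) and ∂_{z̄} u₁ = (G')*·(∂_{z̄} v₁)∘G ∈ L²(𝔻). -/

import Mathlib

open Complex MeasureTheory Metric

noncomputable section

/-- The Wirtinger derivative `∂_z = (∂₁ - i∂₂)/2` of a function `ℂ → ℂ`. -/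
def wz (f : ℂ → ℂ) (z : ℂ) : ℂ := (fderiv ℝ f z 1 - I * fderiv ℝ f z I) / 2

/-- The conjugate Wirtinger derivative `∂_{z̄} = (∂₁ + i∂₂)/2` of a function `ℂ → ℂ`. -/
def wzb (f : ℂ → ℂ) (z : ℂ) : ℂ := (fderiv ℝ f z 1 + I * fderiv ℝ f z I) / 2

private lemma clm_det_le (L : ℂ →L[ℝ] ℂ) : |L.det| ≤ 2 * ‖L‖ ^ 2 := by
  have hdet : L.det = (L 1).re * (L I).im - (L I).re * (L 1).im := by
    rw [ContinuousLinearMap.det, ← LinearMap.det_toMatrix Complex.basisOneI,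
      Matrix.det_fin_two]
    simp [LinearMap.toMatrix_apply, Complex.coe_basisOneI_repr, Complex.coe_basisOneI]
  have h1 : ‖L 1‖ ≤ ‖L‖ := by simpa using L.le_opNorm 1
  have hI : ‖L I‖ ≤ ‖L‖ := by simpa using L.le_opNorm I
  have h1re : |(L 1).re| ≤ ‖L 1‖ := Complex.abs_re_le_norm _
  have h1im : |(L 1).im| ≤ ‖L 1‖ := Complex.abs_im_le_norm _
  have hIre : |(L I).re| ≤ ‖L I‖ := Complex.abs_re_le_norm _
  have hIim : |(L I).im| ≤ ‖L I‖ := Complex.abs_im_le_norm _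
  rw [hdet]
  
  have h2 : |(L 1).re * (L I).im - (L I).re * (L 1).im| ≤
      |(L 1).re| * |(L I).im| + |(L I).re| * |(L 1).im| := by
    refine (abs_sub _ _).trans ?_
    rw [abs_mul, abs_mul]
  refine h2.trans ?_
  nlinarith [norm_nonneg (L 1), norm_nonneg (L I), norm_nonneg L,
    abs_nonneg (L 1).re, abs_nonneg (L I).re, abs_nonneg (L 1).im, abs_nonneg (L I).im]


private lemma fderiv_comp_mul (G v : ℂ → ℂ) (z : ℂ) (hG : DifferentiableAt ℂ G z)
    (hv : DifferentiableAt ℝ v (G z)) (c : ℂ) :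
    fderiv ℝ (v ∘ G) z c = fderiv ℝ v (G z) (c * deriv G z) := by
  have hGF : HasFDerivAt G
      (((ContinuousLinearMap.smulRight (1 : ℂ →L[ℂ] ℂ) (deriv G z)).restrictScalars ℝ)) z :=
    (hG.hasDerivAt.hasFDerivAt).restrictScalars ℝ
  have := (hv.hasFDerivAt.comp z hGF).fderiv
  rw [this]
  simp [smul_eq_mul]

private lemma fderiv_apply_decomp (L : ℂ →L[ℝ] ℂ) (c : ℂ) :
    L c = (c.re : ℂ) * L 1 + (c.im : ℂ) * L I := by
  conv_lhs => rw [← Complex.re_add_im c]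
  have : ((c.re : ℂ) + (c.im : ℂ) * I) = c.re • (1 : ℂ) + c.im • I := by
    simp [Complex.real_smul]
  rw [this, map_add]
  rw [L.map_smul, L.map_smul]
  simp [Complex.real_smul]

private lemma wz_comp (G v : ℂ → ℂ) (z : ℂ) (hG : DifferentiableAt ℂ G z)
    (hv : DifferentiableAt ℝ v (G z)) :
    wz (v ∘ G) z = deriv G z * wz v (G z) := by
  have h1 := fderiv_comp_mul G v z hG hv 1
  have hI := fderiv_comp_mul G v z hG hv I
  set d := deriv G z with hd
  set L := fderiv ℝ v (G z) with hL
  have e1 : L (1 * d) = (d.re : ℂ) * L 1 + (d.im : ℂ) * L I := by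
    rw [one_mul, fderiv_apply_decomp]
  have e2 : L (I * d) = -(d.im : ℂ) * L 1 + (d.re : ℂ) * L I := by
    rw [fderiv_apply_decomp]
    simp [Complex.mul_re, Complex.mul_im]
  rw [wz, wz, h1, hI, e1, e2]
  have hre := Complex.re_add_im d
  linear_combination ((L 1 - I * L I) / 2) * hre + ((d.im : ℂ) * L I / 2) * Complex.I_sq

private lemma wzb_comp (G v : ℂ → ℂ) (z : ℂ) (hG : DifferentiableAt ℂ G z)
    (hv : DifferentiableAt ℝ v (G z)) :
    wzb (v ∘ G) z = (starRingEnd ℂ) (deriv G z) * wzb v (G z) := by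
  have h1 := fderiv_comp_mul G v z hG hv 1
  have hI := fderiv_comp_mul G v z hG hv I
  set d := deriv G z with hd
  set L := fderiv ℝ v (G z) with hL
  have e1 : L (1 * d) = (d.re : ℂ) * L 1 + (d.im : ℂ) * L I := by
    rw [one_mul, fderiv_apply_decomp]
  have e2 : L (I * d) = -(d.im : ℂ) * L 1 + (d.re : ℂ) * L I := by
    rw [fderiv_apply_decomp]
    simp [Complex.mul_re, Complex.mul_im]
  have hconj : (starRingEnd ℂ) d = (d.re : ℂ) - (d.im : ℂ) * I := by
    simp [Complex.ext_iff]
  rw [wzb, wzb, h1, hI, e1, e2, hconj]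
  linear_combination ((d.im : ℂ) * L I / 2) * Complex.I_sq


private lemma wz_meas (f : ℂ → ℂ) : Measurable (wz f) := by
  have h1 := measurable_fderiv_apply_const ℝ f (1 : ℂ)
  have h2 := measurable_fderiv_apply_const ℝ f I
  exact (h1.sub (h2.const_mul I)).div_const 2

private lemma wzb_meas (f : ℂ → ℂ) : Measurable (wzb f) := by
  have h1 := measurable_fderiv_apply_const ℝ f (1 : ℂ)
  have h2 := measurable_fderiv_apply_const ℝ f I
  exact (h1.add (h2.const_mul I)).div_const 2

private lemma norm_wz_le (f : ℂ → ℂ) (z : ℂ) : ‖wz f z‖ ≤ ‖fderiv ℝ f z‖ := by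
  have h1 : ‖fderiv ℝ f z 1‖ ≤ ‖fderiv ℝ f z‖ := by
    simpa using (fderiv ℝ f z).le_opNorm 1
  have h2 : ‖fderiv ℝ f z I‖ ≤ ‖fderiv ℝ f z‖ := by
    simpa using (fderiv ℝ f z).le_opNorm I
  rw [wz]
  rw [norm_div]
  have : ‖fderiv ℝ f z 1 - I * fderiv ℝ f z I‖ ≤
      ‖fderiv ℝ f z 1‖ + ‖I * fderiv ℝ f z I‖ := norm_sub_le _ _
  rw [norm_mul, Complex.norm_I, one_mul] at this
  have h2' : ‖(2 : ℂ)‖ = 2 := by norm_num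
  rw [h2']
  linarith

private lemma norm_wzb_le (f : ℂ → ℂ) (z : ℂ) : ‖wzb f z‖ ≤ ‖fderiv ℝ f z‖ := by
  have h1 : ‖fderiv ℝ f z 1‖ ≤ ‖fderiv ℝ f z‖ := by
    simpa using (fderiv ℝ f z).le_opNorm 1
  have h2 : ‖fderiv ℝ f z I‖ ≤ ‖fderiv ℝ f z‖ := by
    simpa using (fderiv ℝ f z).le_opNorm I
  rw [wzb, norm_div]
  have : ‖fderiv ℝ f z 1 + I * fderiv ℝ f z I‖ ≤
      ‖fderiv ℝ f z 1‖ + ‖I * fderiv ℝ f z I‖ := norm_add_le _ _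
  rw [norm_mul, Complex.norm_I, one_mul] at this
  have h2' : ‖(2 : ℂ)‖ = 2 := by norm_num
  rw [h2']
  linarith

private lemma pushforward_bound (s t : Set ℂ) (hs : IsOpen s) (ht : IsOpen t)
    (hsb : Bornology.IsBounded s)
    (F G : ℂ → ℂ) (hF : Set.BijOn F s t)
    (hGF : ∀ x ∈ s, G (F x) = x)
    (hFhol : DifferentiableOn ℂ F s) (hGhol : DifferentiableOn ℂ G t)
    (M : ℝ) (hM1 : 1 ≤ M)
    (hFd : ∀ z ∈ s, ‖fderiv ℝ F z‖ ≤ M) (hGd : ∀ z ∈ t, ‖fderiv ℝ G z‖ ≤ M)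
    (v : ℂ → ℂ) (hv : ContDiff ℝ 1 v) :
    (∫ z in t, ‖v (G z)‖ ^ 2 + ‖fderiv ℝ (v ∘ G) z‖ ^ 2) ≤
      (2 * M ^ 4) * ∫ z in s, ‖v z‖ ^ 2 + ‖fderiv ℝ v z‖ ^ 2 := by
  have hts : t = F '' s := hF.image_eq.symm
  have hf' : ∀ x ∈ s, HasFDerivWithinAt F (fderiv ℝ F x) s x := fun x hx =>
    ((hFhol.differentiableAt (hs.mem_nhds hx)).restrictScalars ℝ).hasFDerivAt.hasFDerivWithinAt
  rw [hts, integral_image_eq_integral_abs_det_fderiv_smul volume hs.measurableSet hf' hF.injOn]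
  have hvc : Continuous v := hv.continuous
  have hfdc : Continuous (fderiv ℝ v) := hv.continuous_fderiv one_ne_zero
  have hcont : Continuous (fun z => ‖v z‖ ^ 2 + ‖fderiv ℝ v z‖ ^ 2) := by fun_prop
  have hint : IntegrableOn (fun z => ‖v z‖ ^ 2 + ‖fderiv ℝ v z‖ ^ 2) s volume :=
    (hcont.continuousOn.integrableOn_compact hsb.isCompact_closure).mono_set subset_closure
  have hint2 : Integrable (fun z => (2 * M ^ 4) * (‖v z‖ ^ 2 + ‖fderiv ℝ v z‖ ^ 2))
      (volume.restrict s) := hint.const_mul _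
  have key : ∀ x ∈ s,
      |(fderiv ℝ F x).det| • ((fun z => ‖v (G z)‖ ^ 2 + ‖fderiv ℝ (v ∘ G) z‖ ^ 2) (F x)) ≤
        (2 * M ^ 4) * (‖v x‖ ^ 2 + ‖fderiv ℝ v x‖ ^ 2) := by
    intro x hx
    have hFx : F x ∈ t := hF.mapsTo hx
    have hGFx : G (F x) = x := hGF x hx
    have hGdiff : DifferentiableAt ℝ G (F x) :=
      (hGhol.differentiableAt (ht.mem_nhds hFx)).restrictScalars ℝ
    have hvdiff : DifferentiableAt ℝ v (G (F x)) := (hv.differentiable one_ne_zero) _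
    have hchain : fderiv ℝ (v ∘ G) (F x) =
        (fderiv ℝ v x).comp (fderiv ℝ G (F x)) := by
      rw [fderiv_comp (F x) hvdiff hGdiff, hGFx]
    have hnorm : ‖fderiv ℝ (v ∘ G) (F x)‖ ≤ ‖fderiv ℝ v x‖ * M := by
      rw [hchain]
      exact (ContinuousLinearMap.opNorm_comp_le _ _).trans
        (mul_le_mul_of_nonneg_left (hGd _ hFx) (norm_nonneg _))
    have hdet : |(fderiv ℝ F x).det| ≤ 2 * M ^ 2 := by
      refine (clm_det_le _).trans ?_
      have := hFd x hx
      nlinarith [norm_nonneg (fderiv ℝ F x)]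
    simp only [smul_eq_mul, hGFx]
    have hfn : ‖fderiv ℝ (v ∘ G) (F x)‖ ^ 2 ≤ (‖fderiv ℝ v x‖ * M) ^ 2 := by
      nlinarith [norm_nonneg (fderiv ℝ (v ∘ G) (F x))]
    have hd2 : |(fderiv ℝ F x).det| * (‖v x‖ ^ 2 + ‖fderiv ℝ (v ∘ G) (F x)‖ ^ 2)
        ≤ (2 * M ^ 2) * (‖v x‖ ^ 2 + ‖fderiv ℝ (v ∘ G) (F x)‖ ^ 2) :=
      mul_le_mul_of_nonneg_right hdet (by positivity)
    have hM2 : M ^ 2 ≤ M ^ 4 := by nlinarith [hM1, sq_nonneg (M*M - 1), sq_nonneg M]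
    nlinarith [hd2, mul_le_mul_of_nonneg_left hfn (by positivity : (0:ℝ) ≤ 2 * M ^ 2),
      mul_nonneg (sub_nonneg.2 hM2) (sq_nonneg (‖v x‖))]
  calc (∫ x in s, |(fderiv ℝ F x).det| •
        ((fun z => ‖v (G z)‖ ^ 2 + ‖fderiv ℝ (v ∘ G) z‖ ^ 2) (F x)))
      ≤ ∫ x in s, (2 * M ^ 4) * (‖v x‖ ^ 2 + ‖fderiv ℝ v x‖ ^ 2) := by
        refine integral_mono_of_nonneg ?_ hint2 ?_
        · refine (ae_restrict_iff' hs.measurableSet).2 (Filter.Eventually.of_forall ?_)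
          intro x hx
          have : (0:ℝ) ≤ ‖v (G (F x))‖ ^ 2 + ‖fderiv ℝ (v ∘ G) (F x)‖ ^ 2 := by positivity
          simpa [smul_eq_mul] using mul_nonneg (abs_nonneg _) this
        · exact (ae_restrict_iff' hs.measurableSet).2 (Filter.Eventually.of_forall key)
    _ = (2 * M ^ 4) * ∫ z in s, ‖v z‖ ^ 2 + ‖fderiv ℝ v z‖ ^ 2 := integral_const_mul _ _


/-- Pushforward by a conformal map: let `F : Ω → 𝔻` be a bijective holomorphic map with
holomorphic inverse `G`, both extending `C¹` to the closures with bounded derivatives. Then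
`U : v ↦ v ∘ G` is a bounded bijection from `H¹(Ω)` to `H¹(𝔻)` (with inverse `u ↦ u ∘ F`),
and the Wirtinger derivatives transform by the chain rule
`∂_z(v∘G) = G'·(∂_z v)∘G`, `∂_{z̄}(v∘G) = (G')*·(∂_{z̄} v)∘G`, preserving membership
in `L²`. Functions are represented by `C¹` representatives defined on all of `ℂ`. -/
theorem conformal_pushforward
    (Ω : Set ℂ) (hΩ : IsOpen Ω) (hbdd : Bornology.IsBounded Ω)
    (F G : ℂ → ℂ)
    (hF : Set.BijOn F Ω (ball (0 : ℂ) 1))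
    (hinv : Set.InvOn G F Ω (ball (0 : ℂ) 1))
    (hFhol : DifferentiableOn ℂ F Ω)
    (hGhol : DifferentiableOn ℂ G (ball (0 : ℂ) 1))
    (hFC1 : ContDiffOn ℝ 1 F (closure Ω))
    (hGC1 : ContDiffOn ℝ 1 G (closure (ball (0 : ℂ) 1)))
    (hFd : ∃ M : ℝ, (∀ z ∈ closure Ω, ‖fderivWithin ℝ F (closure Ω) z‖ ≤ M) ∧
      (∀ z ∈ closure (ball (0 : ℂ) 1), ‖fderivWithin ℝ G (closure (ball (0 : ℂ) 1)) z‖ ≤ M)) :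
    -- `U` is a bijection (with inverse `u ↦ u ∘ F`) ...
    ((∀ v : ℂ → ℂ, ∀ z ∈ Ω, v (G (F z)) = v z) ∧
     (∀ u : ℂ → ℂ, ∀ z ∈ ball (0 : ℂ) 1, u (F (G z)) = u z)) ∧
    -- ... bounded from `H¹(Ω)` to `H¹(𝔻)` with bounded inverse ...
    (∃ C > 0,
      (∀ v : ℂ → ℂ, ContDiff ℝ 1 v →
        (∫ z in ball (0 : ℂ) 1, ‖v (G z)‖ ^ 2 + ‖fderiv ℝ (v ∘ G) z‖ ^ 2) ≤
          C * ∫ z in Ω, ‖v z‖ ^ 2 + ‖fderiv ℝ v z‖ ^ 2) ∧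
      (∀ u : ℂ → ℂ, ContDiff ℝ 1 u →
        (∫ z in Ω, ‖u (F z)‖ ^ 2 + ‖fderiv ℝ (u ∘ F) z‖ ^ 2) ≤
          C * ∫ z in ball (0 : ℂ) 1, ‖u z‖ ^ 2 + ‖fderiv ℝ u z‖ ^ 2)) ∧
    -- ... and the Wirtinger derivatives transform by the chain rule, preserving `L²`.
    (∀ v₂ : ℂ → ℂ, ∀ z ∈ ball (0 : ℂ) 1, DifferentiableAt ℝ v₂ (G z) →
      wz (v₂ ∘ G) z = deriv G z * wz v₂ (G z)) ∧
    (∀ v₁ : ℂ → ℂ, ∀ z ∈ ball (0 : ℂ) 1, DifferentiableAt ℝ v₁ (G z) →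
      wzb (v₁ ∘ G) z = (starRingEnd ℂ) (deriv G z) * wzb v₁ (G z)) ∧
    (∀ v₂ : ℂ → ℂ, ContDiff ℝ 1 v₂ →
      MemLp (fun z => wz v₂ z) 2 (volume.restrict Ω) →
      MemLp (fun z => wz (v₂ ∘ G) z) 2 (volume.restrict (ball (0 : ℂ) 1))) ∧
    (∀ v₁ : ℂ → ℂ, ContDiff ℝ 1 v₁ →
      MemLp (fun z => wzb v₁ z) 2 (volume.restrict Ω) →
      MemLp (fun z => wzb (v₁ ∘ G) z) 2 (volume.restrict (ball (0 : ℂ) 1))) := by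
  obtain ⟨M₀, hMF₀, hMG₀⟩ := hFd
  set M : ℝ := max M₀ 1 with hM
  have hM1 : 1 ≤ M := le_max_right _ _
  have hGbij : Set.BijOn G (ball (0 : ℂ) 1) Ω := Set.BijOn.symm hinv.symm hF
  have hFd' : ∀ z ∈ Ω, ‖fderiv ℝ F z‖ ≤ M := by
    intro z hz
    rw [← fderivWithin_of_mem_nhds (Filter.mem_of_superset (hΩ.mem_nhds hz) subset_closure)]
    exact (hMF₀ z (subset_closure hz)).trans (le_max_left _ _)
  have hGd' : ∀ z ∈ ball (0 : ℂ) 1, ‖fderiv ℝ G z‖ ≤ M := by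
    intro z hz
    rw [← fderivWithin_of_mem_nhds
      (Filter.mem_of_superset (isOpen_ball.mem_nhds hz) subset_closure)]
    exact (hMG₀ z (subset_closure hz)).trans (le_max_left _ _)
  have hballbdd : Bornology.IsBounded (ball (0 : ℂ) 1) := isBounded_ball
  -- key derivative bound for the L² parts
  have hGmem : ∀ z ∈ ball (0 : ℂ) 1, G z ∈ Ω := fun z hz => hGbij.mapsTo hz
  have hkey : ∀ v : ℂ → ℂ, ContDiff ℝ 1 v →
      ∃ C : ℝ, ∀ z ∈ ball (0 : ℂ) 1, ‖fderiv ℝ (v ∘ G) z‖ ≤ C := by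
    intro v hv
    obtain ⟨K, hK⟩ := hbdd.isCompact_closure.exists_bound_of_continuousOn
      ((hv.continuous_fderiv one_ne_zero).continuousOn)
    refine ⟨K * M, fun z hz => ?_⟩
    have hGdiff : DifferentiableAt ℝ G z :=
      (hGhol.differentiableAt (isOpen_ball.mem_nhds hz)).restrictScalars ℝ
    have hvdiff : DifferentiableAt ℝ v (G z) := (hv.differentiable one_ne_zero) _
    rw [fderiv_comp z hvdiff hGdiff]
    have h1 : ‖fderiv ℝ v (G z)‖ ≤ K := hK _ (subset_closure (hGmem z hz))
    have h2 : ‖fderiv ℝ G z‖ ≤ M := hGd' z hz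
    refine (ContinuousLinearMap.opNorm_comp_le _ _).trans ?_
    exact mul_le_mul h1 h2 (norm_nonneg _) ((norm_nonneg _).trans h1)
  haveI : IsFiniteMeasure (volume.restrict (ball (0 : ℂ) 1)) :=
    ⟨by rw [Measure.restrict_apply_univ]; exact measure_ball_lt_top⟩
  refine ⟨⟨fun v z hz => by rw [hinv.1 hz], fun u z hz => by rw [hinv.2 hz]⟩,
    ⟨2 * M ^ 4, by positivity, ?_, ?_⟩, ?_, ?_, ?_, ?_⟩
  · intro v hv
    exact pushforward_bound Ω (ball (0 : ℂ) 1) hΩ isOpen_ball hbdd F G hF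
      (fun x hx => hinv.1 hx) hFhol hGhol M hM1 hFd' hGd' v hv
  · intro u hu
    exact pushforward_bound (ball (0 : ℂ) 1) Ω isOpen_ball hΩ hballbdd G F hGbij
      (fun x hx => hinv.2 hx) hGhol hFhol M hM1 hGd' hFd' u hu
  · intro v₂ z hz hv
    exact wz_comp G v₂ z (hGhol.differentiableAt (isOpen_ball.mem_nhds hz)) hv
  · intro v₁ z hz hv
    exact wzb_comp G v₁ z (hGhol.differentiableAt (isOpen_ball.mem_nhds hz)) hv
  · intro v₂ hv₂ _
    obtain ⟨C, hC⟩ := hkey v₂ hv₂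
    refine MemLp.of_bound (wz_meas (v₂ ∘ G)).aestronglyMeasurable C ?_
    refine (ae_restrict_iff' measurableSet_ball).2 (Filter.Eventually.of_forall ?_)
    intro z hz
    exact (norm_wz_le _ _).trans (hC z hz)
  · intro v₁ hv₁ _
    obtain ⟨C, hC⟩ := hkey v₁ hv₁
    refine MemLp.of_bound (wzb_meas (v₁ ∘ G)).aestronglyMeasurable C ?_
    refine (ae_restrict_iff' measurableSet_ball).2 (Filter.Eventually.of_forall ?_)
    intro z hz
    exact (norm_wzb_le _ _).trans (hC z hz)


end
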